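/- Let m ≥ 1 and let λ_1,…,λ_m be nonnegative integers with Σ_{s=1}^m s·λ_s = m. The number of index sequences (α_1,…,α_m) of length m whose component partition of {1,…,m} has exactly λ_s blocks of size s for each s ∈ {1,…,m} equals m! / (1^{λ_1} 2^{λ_2} ⋯ m^{λ_m} · λ_1! λ_2! ⋯ λ_m!). -/

import Mathlib

open scoped Classical

namespace IdxSeqAux

open Finset Function

def IdxOK (m : ℕ) (α : ℕ → ℕ) : Prop :=
  (∀ j, 1 ≤ j → j ≤ m → α j < j) ∧ ∀ j, ¬(1 ≤ j ∧ j ≤ m) → α j = 0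

noncomputable def allSeqs (m : ℕ) : Finset (ℕ → ℕ) :=
  ((((Finset.Icc 1 m).pi fun _ => Finset.range (m+1))).image
      (fun f j => if h : j ∈ Finset.Icc 1 m then f j h else 0)).filter (IdxOK m)

lemma mem_allSeqs {m : ℕ} {α : ℕ → ℕ} : α ∈ allSeqs m ↔ IdxOK m α := by
  constructor
  · intro h; exact (Finset.mem_filter.1 h).2
  · intro h
    refine Finset.mem_filter.2 ⟨?_, h⟩
    refine Finset.mem_image.2 ⟨fun j _ => α j, ?_, ?_⟩
    · refine Finset.mem_pi.2 fun j hj => Finset.mem_range.2 ?_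
      have := h.1 j (Finset.mem_Icc.1 hj).1 (Finset.mem_Icc.1 hj).2
      have := (Finset.mem_Icc.1 hj).2
      omega
    · funext j
      by_cases hj : j ∈ Finset.Icc 1 m
      · simp [hj]
      · simp [hj, h.2 j (by simpa [Finset.mem_Icc] using hj)]

variable {m : ℕ} {α : ℕ → ℕ}

lemma apply_le (hα : IdxOK m α) (x : ℕ) : α x ≤ x := by
  by_cases hx : 1 ≤ x ∧ x ≤ m
  · exact le_of_lt (hα.1 x hx.1 hx.2)
  · simp [hα.2 x hx]

lemma iterate_le (hα : IdxOK m α) (j k : ℕ) : α^[k] j ≤ j := by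
  induction k with
  | zero => simp
  | succ k ih =>
      rw [Function.iterate_succ_apply']
      exact le_trans (apply_le hα _) ih

lemma iterate_zero_of_root (hα : IdxOK m α) {h : ℕ} (h0 : α h = 0) :
    ∀ k, 1 ≤ k → α^[k] h = 0 := by
  intro k hk
  induction k with
  | zero => omega
  | succ k ih =>
      rcases Nat.eq_or_lt_of_le hk with hk' | hk'
      · simp [← hk', h0]
      · rw [Function.iterate_succ_apply']
        rw [ih (by omega)]
        exact hα.2 0 (by omega)

lemma root_exists (hα : IdxOK m α) :
    ∀ j, 1 ≤ j → j ≤ m → ∃ h, (1 ≤ h ∧ h ≤ m ∧ α h = 0) ∧ ∃ k, α^[k] j = h := by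
  intro j
  induction j using Nat.strong_induction_on with
  | _ j ih =>
    intro hj1 hjm
    by_cases h0 : α j = 0
    · exact ⟨j, ⟨hj1, hjm, h0⟩, 0, rfl⟩
    · have hlt : α j < j := hα.1 j hj1 hjm
      obtain ⟨h, hh, k, hk⟩ := ih (α j) hlt (by omega) (by omega)
      exact ⟨h, hh, k + 1, by rw [Function.iterate_succ_apply]; exact hk⟩

lemma root_unique (hα : IdxOK m α) {j h h' : ℕ}
    (hr : 1 ≤ h ∧ α h = 0) (hr' : 1 ≤ h' ∧ α h' = 0)
    (hk : ∃ k, α^[k] j = h) (hk' : ∃ k, α^[k] j = h') : h = h' := by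
  obtain ⟨k, hk⟩ := hk
  obtain ⟨k', hk'⟩ := hk'
  have key : ∀ a b (x y : ℕ), a ≤ b → α^[a] j = x → α^[b] j = y →
      α x = 0 → 1 ≤ y → x = y := by
    intro a b x y hab hx hy hx0 hy1
    rcases Nat.eq_or_lt_of_le hab with h | h
    · subst h; omega
    · have hb : α^[b] j = α^[b - a] (α^[a] j) := by
        rw [← Function.iterate_add_apply]
        congr 1
        omega
      rw [hx, iterate_zero_of_root hα hx0 (b - a) (by omega)] at hb
      omega
  rcases le_total k k' with hle | hle
  · exact key k k' h h' hle hk hk' hr.2 hr'.1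
  · exact (key k' k h' h hle hk' hk hr'.2 hr.1).symm

noncomputable def rt (m : ℕ) (α : ℕ → ℕ) (j : ℕ) : ℕ :=
  if h : ∃ r, (1 ≤ r ∧ r ≤ m ∧ α r = 0) ∧ ∃ k, α^[k] j = r then h.choose else 0

lemma rt_spec (hα : IdxOK m α) {j : ℕ} (hj1 : 1 ≤ j) (hjm : j ≤ m) :
    (1 ≤ rt m α j ∧ rt m α j ≤ m ∧ α (rt m α j) = 0) ∧ ∃ k, α^[k] j = rt m α j := by
  have h := root_exists hα j hj1 hjm
  rw [rt, dif_pos h]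
  exact h.choose_spec

lemma rt_eq_iff (hα : IdxOK m α) {j h : ℕ} (hj1 : 1 ≤ j) (hjm : j ≤ m)
    (hroot : 1 ≤ h ∧ α h = 0) : rt m α j = h ↔ ∃ k, α^[k] j = h := by
  obtain ⟨⟨h1, h2, h3⟩, hk⟩ := rt_spec hα hj1 hjm
  constructor
  · rintro rfl; exact hk
  · intro hk'
    exact root_unique hα ⟨h1, h3⟩ hroot hk hk'

noncomputable def compF (m : ℕ) (α : ℕ → ℕ) (h : ℕ) : Finset ℕ :=
  (Finset.Icc 1 m).filter fun j => ∃ k : ℕ, α^[k] j = h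

noncomputable def roots (m : ℕ) (α : ℕ → ℕ) : Finset ℕ := (Finset.Icc 1 m).filter fun h => α h = 0

noncomputable def cnt (m : ℕ) (α : ℕ → ℕ) (s : ℕ) : ℕ :=
  ((Finset.Icc 1 m).filter fun h => α h = 0 ∧ (compF m α h).card = s).card

lemma cnt_eq (m : ℕ) (α : ℕ → ℕ) (s : ℕ) :
    cnt m α s = ((roots m α).filter fun h => (compF m α h).card = s).card := by
  rw [cnt, roots, Finset.filter_filter]

lemma mem_roots {h : ℕ} : h ∈ roots m α ↔ (1 ≤ h ∧ h ≤ m) ∧ α h = 0 := by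
  unfold roots
  rw [Finset.mem_filter, Finset.mem_Icc]

lemma compF_eq_fiber (hα : IdxOK m α) {h : ℕ} (hh : h ∈ roots m α) :
    compF m α h = (Finset.Icc 1 m).filter fun j => rt m α j = h := by
  obtain ⟨⟨h1, hm'⟩, h0⟩ := mem_roots.1 hh
  apply Finset.filter_congr
  intro j hj
  rw [Finset.mem_Icc] at hj
  exact ⟨fun hk => (rt_eq_iff hα hj.1 hj.2 ⟨h1, h0⟩).2 hk,
    fun hk => (rt_eq_iff hα hj.1 hj.2 ⟨h1, h0⟩).1 hk⟩

lemma self_mem_compF {h : ℕ} (hh : h ∈ roots m α) : h ∈ compF m α h := by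
  obtain ⟨⟨h1, hm'⟩, _⟩ := mem_roots.1 hh
  exact Finset.mem_filter.2 ⟨Finset.mem_Icc.2 ⟨h1, hm'⟩, 0, rfl⟩

lemma card_compF_mem (hh : h ∈ roots m α) : (compF m α h).card ∈ Finset.Icc 1 m := by
  rw [Finset.mem_Icc]
  constructor
  · exact Finset.card_pos.2 ⟨h, self_mem_compF hh⟩
  · calc (compF m α h).card ≤ (Finset.Icc 1 m).card := Finset.card_le_card (Finset.filter_subset _ _)
    _ = m := by rw [Nat.card_Icc]; omega

lemma rt_mem_roots (hα : IdxOK m α) {j : ℕ} (hj1 : 1 ≤ j) (hjm : j ≤ m) :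
    rt m α j ∈ roots m α := by
  obtain ⟨⟨h1, h2, h3⟩, _⟩ := rt_spec hα hj1 hjm
  exact mem_roots.2 ⟨⟨h1, h2⟩, h3⟩

lemma sum_card_compF (hα : IdxOK m α) :
    ∑ h ∈ roots m α, (compF m α h).card = m := by
  have h1 := Finset.card_eq_sum_card_fiberwise (f := rt m α) (s := Finset.Icc 1 m)
    (t := roots m α) (fun x hx => by
      rw [Finset.mem_coe, Finset.mem_Icc] at hx; exact rt_mem_roots hα hx.1 hx.2)
  calc ∑ h ∈ roots m α, (compF m α h).card
      = ∑ h ∈ roots m α, ((Finset.Icc 1 m).filter fun j => rt m α j = h).card :=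
        Finset.sum_congr rfl fun h hh => by rw [compF_eq_fiber hα hh]
    _ = (Finset.Icc 1 m).card := h1.symm
    _ = m := by simp

lemma sum_cnt (hα : IdxOK m α) : ∑ s ∈ Finset.Icc 1 m, s * cnt m α s = m := by
  have hmap : ∀ h ∈ roots m α, (compF m α h).card ∈ Finset.Icc 1 m :=
    fun h hh => card_compF_mem hh
  calc ∑ s ∈ Finset.Icc 1 m, s * cnt m α s
      = ∑ s ∈ Finset.Icc 1 m, ∑ h ∈ (roots m α).filter
          (fun h => (compF m α h).card = s), (compF m α h).card := by
        refine Finset.sum_congr rfl fun s _ => ?_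
        rw [cnt_eq, Finset.card_eq_sum_ones, Finset.mul_sum, mul_one]
        refine Finset.sum_congr rfl fun h hh => ?_
        rw [(Finset.mem_filter.1 hh).2]
    _ = ∑ h ∈ roots m α, (compF m α h).card :=
        Finset.sum_fiberwise_of_maps_to hmap (fun h => (compF m α h).card)
    _ = m := sum_card_compF hα


lemma Icc_one_succ (n : ℕ) : Finset.Icc 1 (n+1) = insert (n+1) (Finset.Icc 1 n) := by
  ext x
  simp only [Finset.mem_Icc, Finset.mem_insert]
  omega

noncomputable def csize (m : ℕ) (α : ℕ → ℕ) (j : ℕ) : ℕ := (compF m α (rt m α j)).card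

section Update

variable {n v : ℕ} {β : ℕ → ℕ}

lemma idxOK_succ_iff : (IdxOK (n+1) β ∧ β (n+1) = 0) ↔ IdxOK n β := by
  constructor
  · rintro ⟨⟨h1, h2⟩, h3⟩
    refine ⟨fun j hj1 hjn => h1 j hj1 (by omega), fun j hj => ?_⟩
    by_cases hj' : j = n + 1
    · rw [hj']; exact h3
    · exact h2 j (by omega)
  · rintro ⟨h1, h2⟩
    have htop : β (n+1) = 0 := h2 (n+1) (by omega)
    refine ⟨⟨fun j hj1 hjn => ?_, fun j hj => h2 j (by omega)⟩, htop⟩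
    by_cases hj' : j = n + 1
    · rw [hj', htop]; omega
    · exact lt_of_lt_of_le (h1 j hj1 (by omega)) (by omega)

lemma idxOK_update (hβ : IdxOK n β) (hv : v ≤ n) :
    IdxOK (n+1) (Function.update β (n+1) v) := by
  constructor
  · intro j hj1 hjn
    by_cases hj' : j = n + 1
    · rw [hj', Function.update_self]; omega
    · rw [Function.update_of_ne hj']
      exact lt_of_lt_of_le (hβ.1 j hj1 (by omega)) (by omega)
  · intro j hj
    rw [Function.update_of_ne (by omega)]
    exact hβ.2 j (by omega)

lemma iter_update (hβ : IdxOK n β) (hv : v ≤ n) {j : ℕ} (hj : j ≤ n) (k : ℕ) :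
    (Function.update β (n+1) v)^[k] j = β^[k] j := by
  induction k with
  | zero => simp
  | succ k ih =>
      rw [Function.iterate_succ_apply', Function.iterate_succ_apply', ih]
      have : β^[k] j ≤ n := le_trans (iterate_le hβ j k) hj
      rw [Function.update_of_ne (by omega)]

lemma iter_zero (hβ : IdxOK n β) (k : ℕ) : β^[k] 0 = 0 :=
  Nat.le_zero.1 (iterate_le hβ 0 k)

lemma reach_update_top (hβ : IdxOK n β) (hv : v ≤ n) {h : ℕ} (h1 : 1 ≤ h) (hn : h ≤ n) :
    (∃ k, (Function.update β (n+1) v)^[k] (n+1) = h) ↔ (1 ≤ v ∧ ∃ l, β^[l] v = h) := by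
  constructor
  · rintro ⟨k, hk⟩
    match k with
    | 0 => simp at hk; omega
    | (l+1) =>
        rw [Function.iterate_succ_apply, Function.update_self] at hk
        rw [iter_update hβ hv hv] at hk
        rcases Nat.eq_zero_or_pos v with hv0 | hv0
        · rw [hv0, iter_zero hβ] at hk; omega
        · exact ⟨hv0, l, hk⟩
  · rintro ⟨hv1, l, hl⟩
    refine ⟨l + 1, ?_⟩
    rw [Function.iterate_succ_apply, Function.update_self, iter_update hβ hv hv]
    exact hl

lemma compF_update (hβ : IdxOK n β) (hv : v ≤ n) {h : ℕ} (h1 : 1 ≤ h) (hn : h ≤ n) :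
    compF (n+1) (Function.update β (n+1) v) h =
      if (1 ≤ v ∧ ∃ l, β^[l] v = h) then insert (n+1) (compF n β h) else compF n β h := by
  unfold compF
  rw [Icc_one_succ, Finset.filter_insert]
  have hrest : (Finset.Icc 1 n).filter (fun j => ∃ k, (Function.update β (n+1) v)^[k] j = h)
      = (Finset.Icc 1 n).filter (fun j => ∃ k, β^[k] j = h) := by
    refine Finset.filter_congr fun j hj => ?_
    rw [Finset.mem_Icc] at hj
    constructor
    · rintro ⟨k, hk⟩; exact ⟨k, by rwa [iter_update hβ hv hj.2] at hk⟩
    · rintro ⟨k, hk⟩; exact ⟨k, by rwa [iter_update hβ hv hj.2]⟩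
  rw [hrest]
  by_cases hc : 1 ≤ v ∧ ∃ l, β^[l] v = h
  · rw [if_pos ((reach_update_top hβ hv h1 hn).2 hc), if_pos hc]
  · rw [if_neg (fun hr => hc ((reach_update_top hβ hv h1 hn).1 hr)), if_neg hc]

lemma top_not_mem_compF {h : ℕ} : (n+1) ∉ compF n β h := by
  intro hmem
  have := (Finset.mem_filter.1 hmem).1
  rw [Finset.mem_Icc] at this
  omega

lemma top_not_mem_roots : (n+1) ∉ roots n β := by
  intro hmem
  have := (mem_roots.1 hmem).1
  omega

lemma card_compF_update (hβ : IdxOK n β) (hv1 : 1 ≤ v) (hvn : v ≤ n) {h : ℕ}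
    (hh : h ∈ roots n β) :
    (compF (n+1) (Function.update β (n+1) v) h).card =
      (compF n β h).card + (if rt n β v = h then 1 else 0) := by
  obtain ⟨⟨hh1, hhn⟩, hh0⟩ := mem_roots.1 hh
  rw [compF_update hβ hvn hh1 hhn]
  have hiff : (1 ≤ v ∧ ∃ l, β^[l] v = h) ↔ rt n β v = h := by
    constructor
    · rintro ⟨_, hl⟩; exact (rt_eq_iff hβ hv1 hvn ⟨hh1, hh0⟩).2 hl
    · intro hr; exact ⟨hv1, (rt_eq_iff hβ hv1 hvn ⟨hh1, hh0⟩).1 hr⟩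
  by_cases hc : rt n β v = h
  · rw [if_pos (hiff.2 hc), if_pos hc, Finset.card_insert_of_notMem top_not_mem_compF]
  · rw [if_neg (fun hr => hc (hiff.1 hr)), if_neg hc]
    omega

lemma compF_ext (hβ : IdxOK n β) {h : ℕ} (h1 : 1 ≤ h) (hn : h ≤ n) :
    compF (n+1) β h = compF n β h := by
  have hb : Function.update β (n+1) 0 = β := by
    have : β (n+1) = 0 := hβ.2 (n+1) (by omega)
    rw [← this, Function.update_eq_self]
  have := compF_update (v := 0) hβ (by omega) h1 hn
  rw [hb] at this
  rw [this, if_neg (by rintro ⟨h0, _⟩; omega)]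

lemma compF_top (hβ : IdxOK n β) : compF (n+1) β (n+1) = {n+1} := by
  ext j
  simp only [compF, Finset.mem_filter, Finset.mem_Icc, Finset.mem_singleton]
  constructor
  · rintro ⟨⟨hj1, hjn⟩, k, hk⟩
    by_contra hne
    have hjn' : j ≤ n := by omega
    have : β^[k] j ≤ n := le_trans (iterate_le hβ j k) hjn'
    omega
  · rintro rfl
    exact ⟨⟨by omega, le_refl _⟩, 0, rfl⟩

lemma roots_update (hv1 : 1 ≤ v) :
    roots (n+1) (Function.update β (n+1) v) = roots n β := by
  ext h
  rw [mem_roots, mem_roots]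
  constructor
  · rintro ⟨⟨h1, h2⟩, h0⟩
    by_cases hh : h = n + 1
    · rw [hh, Function.update_self] at h0; omega
    · rw [Function.update_of_ne hh] at h0
      exact ⟨⟨h1, by omega⟩, h0⟩
  · rintro ⟨⟨h1, h2⟩, h0⟩
    rw [Function.update_of_ne (by omega)]
    exact ⟨⟨h1, by omega⟩, h0⟩

lemma roots_ext (hβ : IdxOK n β) : roots (n+1) β = insert (n+1) (roots n β) := by
  unfold roots
  rw [Icc_one_succ, Finset.filter_insert, if_pos (hβ.2 (n+1) (by omega))]

lemma cnt_ext (hβ : IdxOK n β) {s : ℕ} :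
    cnt (n+1) β s = cnt n β s + if s = 1 then 1 else 0 := by
  rw [cnt_eq, cnt_eq, roots_ext hβ, Finset.filter_insert]
  have hrest : (roots n β).filter (fun h => (compF (n+1) β h).card = s)
      = (roots n β).filter (fun h => (compF n β h).card = s) := by
    refine Finset.filter_congr fun h hh => ?_
    obtain ⟨⟨h1, h2⟩, _⟩ := mem_roots.1 hh
    rw [compF_ext hβ h1 h2]
  rw [hrest, compF_top hβ, Finset.card_singleton]
  by_cases hs : s = 1
  · rw [if_pos (by omega), if_pos hs,
      Finset.card_insert_of_notMem (fun hc => top_not_mem_roots ((Finset.filter_subset _ _) hc))]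
  · rw [if_neg (by omega), if_neg hs]
    omega

lemma cnt_upd (hβ : IdxOK n β) (hv1 : 1 ≤ v) (hvn : v ≤ n) {s : ℕ} (hs : 1 ≤ s) :
    cnt (n+1) (Function.update β (n+1) v) s + (if csize n β v = s then 1 else 0)
      = cnt n β s + (if csize n β v + 1 = s then 1 else 0) := by
  set r := rt n β v with hr
  have hrmem : r ∈ roots n β := rt_mem_roots hβ hv1 hvn
  have hcnt : cnt (n+1) (Function.update β (n+1) v) s
      = ((roots n β).filter
          (fun h => (compF n β h).card + (if r = h then 1 else 0) = s)).card := by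
    rw [cnt_eq, roots_update hv1]
    congr 1
    refine Finset.filter_congr fun h hh => ?_
    rw [card_compF_update hβ hv1 hvn hh]
  have hA : cnt n β s = ((roots n β).filter (fun h => (compF n β h).card = s)).card := cnt_eq n β s
  rw [hcnt, hA]
  set A := (roots n β).filter (fun h => (compF n β h).card = s) with hAdef
  set A' := (roots n β).filter (fun h => (compF n β h).card + (if r = h then 1 else 0) = s)
    with hA'def
  by_cases hc1 : csize n β v = s
  · -- A' = A.erase r, r ∈ A
    have hrA : r ∈ A := Finset.mem_filter.2 ⟨hrmem, hc1⟩
    have hAA : A' = A.erase r := by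
      ext h
      rw [hA'def, Finset.mem_filter, Finset.mem_erase, hAdef, Finset.mem_filter]
      constructor
      · rintro ⟨hh, heq⟩
        have hne : r ≠ h := by
          rintro rfl
          rw [if_pos rfl] at heq
          unfold r at heq
          rw [← hr] at heq
          change csize n β v + 1 = s at heq
          omega
        rw [if_neg hne] at heq
        exact ⟨fun hch => hne hch.symm, hh, heq⟩
      · rintro ⟨hne, hh, heq⟩
        rw [if_neg (fun hch => hne hch.symm)]
        exact ⟨hh, by omega⟩
    rw [hAA, if_pos hc1, if_neg (by omega), Finset.card_erase_of_mem hrA]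
    have : 1 ≤ A.card := Finset.card_pos.2 ⟨r, hrA⟩
    omega
  · by_cases hc2 : csize n β v + 1 = s
    · -- A' = insert r A, r ∉ A
      have hrA : r ∉ A := by
        rw [hAdef, Finset.mem_filter]
        rintro ⟨_, hcard⟩
        exact hc1 hcard
      have hAA : A' = insert r A := by
        ext h
        rw [hA'def, Finset.mem_filter, Finset.mem_insert, hAdef, Finset.mem_filter]
        constructor
        · rintro ⟨hh, heq⟩
          by_cases hch : r = h
          · exact Or.inl hch.symm
          · rw [if_neg hch] at heq
            exact Or.inr ⟨hh, by omega⟩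
        · rintro (rfl | ⟨hh, heq⟩)
          · rw [if_pos rfl]
            exact ⟨hrmem, by change csize n β v + 1 = s at hc2 ⊢; omega⟩
          · have hch : r ≠ h := by
              rintro rfl
              exact hc1 heq
            rw [if_neg hch]
            exact ⟨hh, by omega⟩
      rw [hAA, if_neg hc1, if_pos hc2, Finset.card_insert_of_notMem hrA]
    · -- A' = A
      have hAA : A' = A := by
        refine Finset.filter_congr fun h hh => ?_
        constructor
        · intro heq
          by_cases hch : r = h
          · exfalso
            subst hch
            rw [if_pos rfl] at heq
            exact hc2 heq
          · rwa [if_neg hch] at heq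
        · intro heq
          have hch : r ≠ h := by
            rintro rfl
            exact hc1 heq
          rw [if_neg hch]
          omega
      rw [hAA, if_neg hc1, if_neg hc2]

lemma cnt_csize_pos (hβ : IdxOK n β) (hv1 : 1 ≤ v) (hvn : v ≤ n) :
    1 ≤ cnt n β (csize n β v) := by
  rw [cnt_eq]
  refine Finset.card_pos.2 ⟨rt n β v, Finset.mem_filter.2 ⟨rt_mem_roots hβ hv1 hvn, rfl⟩⟩

lemma csize_mem (hβ : IdxOK n β) (hv1 : 1 ≤ v) (hvn : v ≤ n) :
    csize n β v ∈ Finset.Icc 1 n :=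
  card_compF_mem (rt_mem_roots hβ hv1 hvn)

lemma cnt_gt (hα : IdxOK m α) {s : ℕ} (hs : m < s) : cnt m α s = 0 := by
  rw [cnt_eq, Finset.card_eq_zero, Finset.filter_eq_empty_iff]
  intro h hh hcard
  have := card_compF_mem (m := m) (α := α) hh
  rw [Finset.mem_Icc] at this
  omega

lemma card_csize_fiber (hβ : IdxOK n β) (c : ℕ) :
    ((Finset.Icc 1 n).filter fun v => csize n β v = c).card = c * cnt n β c := by
  set L := (Finset.Icc 1 n).filter fun v => csize n β v = c with hL
  set Rc := (roots n β).filter (fun h => (compF n β h).card = c) with hRc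
  have hmap : ∀ v ∈ L, rt n β v ∈ Rc := by
    intro v hv
    obtain ⟨hvI, hvc⟩ := Finset.mem_filter.1 hv
    rw [Finset.mem_Icc] at hvI
    exact Finset.mem_filter.2 ⟨rt_mem_roots hβ hvI.1 hvI.2, hvc⟩
  have h1 := Finset.card_eq_sum_card_fiberwise hmap
  have h2 : ∀ h ∈ Rc, (L.filter fun v => rt n β v = h) = compF n β h := by
    intro h hh
    obtain ⟨hhr, hhc⟩ := Finset.mem_filter.1 hh
    rw [compF_eq_fiber hβ hhr]
    ext j
    rw [Finset.mem_filter, hL, Finset.mem_filter, Finset.mem_filter]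
    constructor
    · rintro ⟨⟨hjI, _⟩, hrt⟩; exact ⟨hjI, hrt⟩
    · rintro ⟨hjI, hrt⟩
      refine ⟨⟨hjI, ?_⟩, hrt⟩
      unfold csize
      rw [hrt, hhc]
  rw [h1, Finset.sum_congr rfl (fun h hh => by rw [h2 h hh, (Finset.mem_filter.1 hh).2])]
  rw [Finset.sum_const, smul_eq_mul, ← cnt_eq]
  ring

end Update


def Scond (m : ℕ) (lam : ℕ → ℕ) (α : ℕ → ℕ) : Prop :=
  ∀ s, 1 ≤ s → s ≤ m → cnt m α s = lam s

noncomputable def S (m : ℕ) (lam : ℕ → ℕ) : Finset (ℕ → ℕ) :=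
  (allSeqs m).filter (Scond m lam)

lemma mem_S {m : ℕ} {lam α : ℕ → ℕ} : α ∈ S m lam ↔ IdxOK m α ∧ Scond m lam α := by
  rw [S, Finset.mem_filter, mem_allSeqs]

def mu0 (lam : ℕ → ℕ) : ℕ → ℕ := fun s => if s = 1 then lam 1 - 1 else lam s

def rho (lam : ℕ → ℕ) (c : ℕ) : ℕ → ℕ := fun s =>
  if s = c then lam c + 1 else if s = c + 1 then lam (c+1) - 1 else lam s

lemma S_empty {m : ℕ} {lam : ℕ → ℕ} (hm : 1 ≤ m)
    (h : ∑ s ∈ Finset.Icc 1 m, s * lam s ≠ m) : S m lam = ∅ := by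
  rw [Finset.eq_empty_iff_forall_notMem]
  intro α hα
  obtain ⟨h1, h2⟩ := mem_S.1 hα
  apply h
  calc ∑ s ∈ Finset.Icc 1 m, s * lam s
      = ∑ s ∈ Finset.Icc 1 m, s * cnt m α s := by
        refine Finset.sum_congr rfl fun s hs => ?_
        rw [Finset.mem_Icc] at hs
        rw [h2 s hs.1 hs.2]
    _ = m := sum_cnt h1

lemma allSeqs_one : allSeqs 1 = {fun _ => 0} := by
  ext α
  rw [mem_allSeqs, Finset.mem_singleton]
  constructor
  · intro h
    funext j
    by_cases hj : j = 1
    · show α j = 0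
      have := h.1 j (by omega) (by omega)
      omega
    · show α j = 0
      exact h.2 j (by omega)
  · rintro rfl
    exact ⟨fun j hj1 hj2 => hj1, fun j hj => rfl⟩

lemma cnt_one : cnt 1 (fun _ => 0) 1 = 1 := by
  have hz : IdxOK 1 (fun _ => 0) := ⟨fun j hj1 hj2 => hj1, fun j hj => rfl⟩
  have hcomp : compF 1 (fun _ => 0) 1 = {1} := by
    ext j
    rw [compF, Finset.mem_filter, Finset.mem_Icc, Finset.mem_singleton]
    constructor
    · rintro ⟨⟨h1, h2⟩, _⟩; omega
    · rintro rfl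
      exact ⟨⟨le_refl _, le_refl _⟩, 0, rfl⟩
  rw [cnt]
  have : Finset.Icc 1 1 = {1} := Finset.Icc_self 1
  rw [this, Finset.filter_singleton, if_pos ⟨rfl, by rw [hcomp]; rfl⟩, Finset.card_singleton]


section Step

variable {n v : ℕ} {lam : ℕ → ℕ}

lemma step_decomp (lam : ℕ → ℕ) (n : ℕ) :
    (S (n+1) lam).card = ((S (n+1) lam).filter (fun α => α (n+1) = 0)).card
      + ∑ v ∈ Finset.Icc 1 n, ((S (n+1) lam).filter (fun α => α (n+1) = v)).card := by
  have hmap : ∀ α ∈ S (n+1) lam, (fun α : ℕ → ℕ => α (n+1)) α ∈ insert 0 (Finset.Icc 1 n) := by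
    intro α hα
    have h1 := (mem_S.1 hα).1
    have h2 := h1.1 (n+1) (by omega) (le_refl _)
    simp only [Finset.mem_insert, Finset.mem_Icc]
    omega
  rw [Finset.card_eq_sum_card_fiberwise hmap,
    Finset.sum_insert (by simp [Finset.mem_Icc])]

lemma pair_bound (hsum : ∑ s ∈ Finset.Icc 1 (n+1), s * lam s = n + 1) {a b : ℕ}
    (ha : a ∈ Finset.Icc 1 (n+1)) (hb : b ∈ Finset.Icc 1 (n+1)) (hab : a ≠ b) :
    a * lam a + b * lam b ≤ n + 1 := by
  have hsub : {a, b} ⊆ Finset.Icc 1 (n+1) := by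
    intro x hx
    rw [Finset.mem_insert, Finset.mem_singleton] at hx
    rcases hx with rfl | rfl <;> assumption
  calc a * lam a + b * lam b = ∑ s ∈ {a, b}, s * lam s :=
    (Finset.sum_pair (f := fun s => s * lam s) hab).symm
    _ ≤ ∑ s ∈ Finset.Icc 1 (n+1), s * lam s := Finset.sum_le_sum_of_subset hsub
    _ = n + 1 := hsum

lemma single_bound (hsum : ∑ s ∈ Finset.Icc 1 (n+1), s * lam s = n + 1) {a : ℕ}
    (ha : a ∈ Finset.Icc 1 (n+1)) : a * lam a ≤ n + 1 := by
  calc a * lam a = ∑ s ∈ {a}, s * lam s := by rw [Finset.sum_singleton]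
    _ ≤ ∑ s ∈ Finset.Icc 1 (n+1), s * lam s :=
        Finset.sum_le_sum_of_subset (Finset.singleton_subset_iff.2 ha)
    _ = n + 1 := hsum

lemma fiber0_empty (hn : 1 ≤ n) (hl : lam 1 = 0) :
    (S (n+1) lam).filter (fun α => α (n+1) = 0) = ∅ := by
  rw [Finset.eq_empty_iff_forall_notMem]
  intro α hα
  obtain ⟨hmem, htop⟩ := Finset.mem_filter.1 hα
  obtain ⟨h1, h2⟩ := mem_S.1 hmem
  have hβ : IdxOK n α := idxOK_succ_iff.1 ⟨h1, htop⟩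
  have he := cnt_ext (s := 1) hβ
  rw [if_pos rfl] at he
  have h3 := h2 1 (by omega) (by omega)
  omega

lemma fiber0_eq (hn : 1 ≤ n) (hl : 1 ≤ lam 1)
    (hsum : ∑ s ∈ Finset.Icc 1 (n+1), s * lam s = n + 1) :
    (S (n+1) lam).filter (fun α => α (n+1) = 0) = S n (mu0 lam) := by
  have hltop : lam (n+1) = 0 := by
    have hpb := pair_bound hsum (a := 1) (b := n+1) (by rw [Finset.mem_Icc]; omega)
      (by rw [Finset.mem_Icc]; omega) (by omega)
    rcases Nat.eq_zero_or_pos (lam (n+1)) with h0 | hpos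
    · exact h0
    · exfalso
      have := Nat.le_mul_of_pos_right (n+1) hpos
      omega
  ext α
  rw [Finset.mem_filter, mem_S, mem_S]
  constructor
  · rintro ⟨⟨h1, h2⟩, htop⟩
    have hβ : IdxOK n α := idxOK_succ_iff.1 ⟨h1, htop⟩
    refine ⟨hβ, fun s hs1 hs2 => ?_⟩
    have he := cnt_ext (s := s) hβ
    have h3 := h2 s hs1 (by omega)
    unfold mu0
    by_cases hs : s = 1
    · rw [if_pos hs]; subst hs
      rw [if_pos rfl] at he
      omega
    · rw [if_neg hs]
      rw [if_neg hs] at he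
      omega
  · rintro ⟨hβ, h2⟩
    obtain ⟨h1, htop⟩ := idxOK_succ_iff.2 hβ
    refine ⟨⟨h1, fun s hs1 hs2 => ?_⟩, htop⟩
    by_cases hs : s ≤ n
    · have he := cnt_ext (s := s) hβ
      have h3 := h2 s hs1 hs
      unfold mu0 at h3
      by_cases hs' : s = 1
      · rw [if_pos hs'] at h3; subst hs'
        rw [if_pos rfl] at he
        omega
      · rw [if_neg hs'] at h3
        rw [if_neg hs'] at he
        omega
    · have hs' : s = n + 1 := by omega
      subst hs'
      have he := cnt_ext (s := n+1) hβ
      have hgt : cnt n α (n+1) = 0 := cnt_gt hβ (by omega)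
      rw [if_neg (by omega)] at he
      omega

lemma fiberv_card (hn : 1 ≤ n) (hv1 : 1 ≤ v) (hvn : v ≤ n) :
    ((S (n+1) lam).filter (fun α => α (n+1) = v)).card
      = ((allSeqs n).filter
          (fun β => Scond (n+1) lam (Function.update β (n+1) v))).card := by
  refine Finset.card_nbij' (fun α => Function.update α (n+1) 0)
    (fun β => Function.update β (n+1) v) ?_ ?_ ?_ ?_
  · intro α hα
    beta_reduce
    obtain ⟨hmem, htop⟩ := Finset.mem_filter.1 hα
    obtain ⟨h1, h2⟩ := mem_S.1 hmem
    have hback : Function.update (Function.update α (n+1) 0) (n+1) v = α := by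
      rw [Function.update_idem, ← htop, Function.update_eq_self]
    refine Finset.mem_filter.2 ⟨mem_allSeqs.2 ?_, ?_⟩
    · apply idxOK_succ_iff.1
      constructor
      · constructor
        · intro j hj1 hjn
          by_cases hj : j = n + 1
          · rw [hj, Function.update_self]; omega
          · rw [Function.update_of_ne hj]; exact h1.1 j hj1 hjn
        · intro j hj
          by_cases hj' : j = n + 1
          · omega
          · rw [Function.update_of_ne hj']; exact h1.2 j hj
      · rw [Function.update_self]
    · rwa [hback]
  · intro β hβ
    beta_reduce
    obtain ⟨hmem, h2⟩ := Finset.mem_filter.1 hβ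
    have hβ' := mem_allSeqs.1 hmem
    refine Finset.mem_filter.2 ⟨mem_S.2 ⟨idxOK_update hβ' hvn, h2⟩, Function.update_self _ _ _⟩
  · intro α hα
    beta_reduce
    obtain ⟨hmem, htop⟩ := Finset.mem_filter.1 hα
    rw [Function.update_idem, ← htop, Function.update_eq_self]
  · intro β hβ
    beta_reduce
    obtain ⟨hmem, _⟩ := Finset.mem_filter.1 hβ
    have hβ' := mem_allSeqs.1 hmem
    have : β (n+1) = 0 := hβ'.2 (n+1) (by omega)
    rw [Function.update_idem, ← this, Function.update_eq_self]


lemma sum_top_split (lam : ℕ → ℕ) (n : ℕ) : ∑ s ∈ Finset.Icc 1 (n+1), s * lam s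
    = (n+1) * lam (n+1) + ∑ s ∈ Finset.Icc 1 n, s * lam s := by
  rw [Icc_one_succ, Finset.sum_insert (by rw [Finset.mem_Icc]; omega)]

lemma sum_rho_lt {c : ℕ} (hc1 : 1 ≤ c) (hcn : c + 1 ≤ n) (hl : 1 ≤ lam (c+1)) :
    ∑ s ∈ Finset.Icc 1 n, s * rho lam c s + 1 = ∑ s ∈ Finset.Icc 1 n, s * lam s := by
  have hcm : c ∈ Finset.Icc 1 n := by rw [Finset.mem_Icc]; omega
  have hcm1 : c + 1 ∈ (Finset.Icc 1 n).erase c := by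
    rw [Finset.mem_erase, Finset.mem_Icc]; omega
  have split : ∀ f : ℕ → ℕ, ∑ s ∈ Finset.Icc 1 n, f s
      = f c + (f (c+1) + ∑ s ∈ ((Finset.Icc 1 n).erase c).erase (c+1), f s) := by
    intro f
    rw [Finset.add_sum_erase _ f hcm1, Finset.add_sum_erase _ f hcm]
  rw [split (fun s => s * rho lam c s), split (fun s => s * lam s)]
  have hcongr : ∑ s ∈ ((Finset.Icc 1 n).erase c).erase (c+1), s * rho lam c s
      = ∑ s ∈ ((Finset.Icc 1 n).erase c).erase (c+1), s * lam s := by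
    refine Finset.sum_congr rfl fun s hs => ?_
    rw [Finset.mem_erase, Finset.mem_erase] at hs
    unfold rho
    rw [if_neg hs.2.1, if_neg hs.1]
  rw [hcongr]
  have h1 : rho lam c c = lam c + 1 := by unfold rho; rw [if_pos rfl]
  have h2 : rho lam c (c+1) = lam (c+1) - 1 := by
    unfold rho; rw [if_neg (by omega), if_pos rfl]
  rw [h1, h2]
  obtain ⟨k, hk⟩ : ∃ k, lam (c+1) = k + 1 := ⟨lam (c+1) - 1, by omega⟩
  rw [hk]
  simp only [Nat.add_sub_cancel]
  ring

lemma sum_rho_top (hn : 1 ≤ n) (lam : ℕ → ℕ) :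
    ∑ s ∈ Finset.Icc 1 n, s * rho lam n s = ∑ s ∈ Finset.Icc 1 n, s * lam s + n := by
  have hcm : n ∈ Finset.Icc 1 n := by rw [Finset.mem_Icc]; omega
  rw [← Finset.add_sum_erase _ (fun s => s * rho lam n s) hcm,
    ← Finset.add_sum_erase _ (fun s => s * lam s) hcm]
  have hcongr : ∑ s ∈ (Finset.Icc 1 n).erase n, s * rho lam n s
      = ∑ s ∈ (Finset.Icc 1 n).erase n, s * lam s := by
    refine Finset.sum_congr rfl fun s hs => ?_
    rw [Finset.mem_erase, Finset.mem_Icc] at hs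
    unfold rho
    rw [if_neg hs.1, if_neg (by omega)]
  rw [hcongr]
  have h1 : rho lam n n = lam n + 1 := by unfold rho; rw [if_pos rfl]
  rw [h1]
  ring

lemma sum_mu0 (hn : 1 ≤ n) (hl : 1 ≤ lam 1) :
    ∑ s ∈ Finset.Icc 1 n, s * mu0 lam s + 1 = ∑ s ∈ Finset.Icc 1 n, s * lam s := by
  have hcm : (1:ℕ) ∈ Finset.Icc 1 n := by rw [Finset.mem_Icc]; omega
  rw [← Finset.add_sum_erase _ (fun s => s * mu0 lam s) hcm,
    ← Finset.add_sum_erase _ (fun s => s * lam s) hcm]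
  have hcongr : ∑ s ∈ (Finset.Icc 1 n).erase 1, s * mu0 lam s
      = ∑ s ∈ (Finset.Icc 1 n).erase 1, s * lam s := by
    refine Finset.sum_congr rfl fun s hs => ?_
    rw [Finset.mem_erase] at hs
    unfold mu0
    rw [if_neg hs.1]
  rw [hcongr]
  have h1 : mu0 lam 1 = lam 1 - 1 := by unfold mu0; rw [if_pos rfl]
  rw [h1]
  omega

lemma cond_iff (hn : 1 ≤ n) {β : ℕ → ℕ} (hβ : IdxOK n β) (hv1 : 1 ≤ v) (hvn : v ≤ n)
    (hsum : ∑ s ∈ Finset.Icc 1 (n+1), s * lam s = n + 1) :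
    Scond (n+1) lam (Function.update β (n+1) v)
      ↔ (1 ≤ lam (csize n β v + 1) ∧ Scond n (rho lam (csize n β v)) β) := by
  set c := csize n β v with hc
  have hcI : c ∈ Finset.Icc 1 n := csize_mem hβ hv1 hvn
  rw [Finset.mem_Icc] at hcI
  have hcnt : ∀ s, 1 ≤ s →
      cnt (n+1) (Function.update β (n+1) v) s + (if c = s then 1 else 0)
        = cnt n β s + (if c + 1 = s then 1 else 0) := fun s hs => cnt_upd hβ hv1 hvn hs
  constructor
  · intro hsc
    have hl : 1 ≤ lam (c+1) := by
      have e1 := hcnt (c+1) (by omega)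
      rw [if_neg (by omega), if_pos rfl] at e1
      have e2 := hsc (c+1) (by omega) (by omega)
      omega
    refine ⟨hl, fun s hs1 hs2 => ?_⟩
    have e1 := hcnt s hs1
    have e2 := hsc s hs1 (by omega)
    unfold rho
    by_cases h1 : s = c
    · rw [if_pos h1]
      subst h1
      rw [if_pos rfl, if_neg (by omega)] at e1
      omega
    · rw [if_neg h1]
      by_cases h2 : s = c + 1
      · rw [if_pos h2]; subst h2
        rw [if_neg (by omega), if_pos rfl] at e1
        omega
      · rw [if_neg h2]
        rw [if_neg (by omega), if_neg (by omega)] at e1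
        omega
  · rintro ⟨hl, hrho⟩
    intro s hs1 hs2
    have e1 := hcnt s hs1
    by_cases hs : s ≤ n
    · have e2 := hrho s hs1 hs
      unfold rho at e2
      by_cases h1 : s = c
      · subst h1
        rw [if_pos rfl] at e2
        rw [if_pos rfl, if_neg (by omega)] at e1
        omega
      · rw [if_neg h1] at e2
        by_cases h2 : s = c + 1
        · subst h2
          rw [if_pos rfl] at e2
          rw [if_neg (by omega), if_pos rfl] at e1
          omega
        · rw [if_neg h2] at e2
          rw [if_neg (by omega), if_neg (by omega)] at e1
          omega
    · have hs' : s = n + 1 := by omega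
      subst hs'
      rw [if_neg (by omega)] at e1
      have hz : cnt n β (n+1) = 0 := cnt_gt hβ (by omega)
      have hsum' : ∑ t ∈ Finset.Icc 1 n, t * rho lam c t = n := by
        calc ∑ t ∈ Finset.Icc 1 n, t * rho lam c t
            = ∑ t ∈ Finset.Icc 1 n, t * cnt n β t := by
              refine Finset.sum_congr rfl fun t ht => ?_
              rw [Finset.mem_Icc] at ht
              rw [hrho t ht.1 ht.2]
          _ = n := sum_cnt hβ
      have htopsum := sum_top_split lam n
      by_cases hcn : c = n
      · have hsr := sum_rho_top hn lam
        rw [hcn] at hsum'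
        have hlam : (n+1) * lam (n+1) = n + 1 := by omega
        have hlam1 : lam (n+1) = 1 :=
          Nat.eq_of_mul_eq_mul_left (Nat.succ_pos n) (by rw [hlam, mul_one])
        rw [if_pos (by omega)] at e1
        omega
      · have hsr := sum_rho_lt (n := n) hcI.1 (by omega) hl
        have hlam : (n+1) * lam (n+1) = 0 := by omega
        have hlam0 : lam (n+1) = 0 := by
          rcases Nat.mul_eq_zero.1 hlam with h | h
          · omega
          · exact h
        rw [if_neg (by omega)] at e1
        omega

lemma sum_v (hn : 1 ≤ n)
    (hsum : ∑ s ∈ Finset.Icc 1 (n+1), s * lam s = n + 1) :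
    ∑ v ∈ Finset.Icc 1 n, ((allSeqs n).filter
        (fun β => Scond (n+1) lam (Function.update β (n+1) v))).card
      = ∑ c ∈ Finset.Icc 1 n, (c * (lam c + 1)) *
          (if 1 ≤ lam (c+1) then (S n (rho lam c)).card else 0) := by
  have hswap : ∑ v ∈ Finset.Icc 1 n, ((allSeqs n).filter
        (fun β => Scond (n+1) lam (Function.update β (n+1) v))).card
      = ∑ β ∈ allSeqs n, ∑ v ∈ Finset.Icc 1 n,
          (if Scond (n+1) lam (Function.update β (n+1) v) then 1 else 0) := by
    rw [Finset.sum_comm]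
    refine Finset.sum_congr rfl fun v _ => ?_
    rw [Finset.card_filter]
  rw [hswap]
  have hinner : ∀ β ∈ allSeqs n, ∑ v ∈ Finset.Icc 1 n,
        (if Scond (n+1) lam (Function.update β (n+1) v) then 1 else 0)
      = ∑ c ∈ Finset.Icc 1 n,
          (if 1 ≤ lam (c+1) ∧ Scond n (rho lam c) β then c * (lam c + 1) else 0) := by
    intro β hβmem
    have hβ := mem_allSeqs.1 hβmem
    have hmap : ∀ v ∈ Finset.Icc 1 n, csize n β v ∈ Finset.Icc 1 n := by
      intro v hv
      rw [Finset.mem_Icc] at hv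
      exact csize_mem hβ hv.1 hv.2
    rw [← Finset.sum_fiberwise_of_maps_to hmap
      (fun v => if Scond (n+1) lam (Function.update β (n+1) v) then 1 else 0)]
    refine Finset.sum_congr rfl fun c hcI => ?_
    have hfib : ∀ v ∈ (Finset.Icc 1 n).filter (fun v => csize n β v = c),
        (if Scond (n+1) lam (Function.update β (n+1) v) then 1 else 0)
          = (if 1 ≤ lam (c+1) ∧ Scond n (rho lam c) β then 1 else 0) := by
      intro v hv
      obtain ⟨hvI, hvc⟩ := Finset.mem_filter.1 hv
      rw [Finset.mem_Icc] at hvI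
      rw [if_congr ((cond_iff hn hβ hvI.1 hvI.2 hsum).trans (by rw [hvc])) rfl rfl]
    rw [Finset.sum_congr rfl hfib, Finset.sum_const, card_csize_fiber hβ c, smul_eq_mul]
    by_cases hP : 1 ≤ lam (c+1) ∧ Scond n (rho lam c) β
    · rw [if_pos hP, if_pos hP, mul_one]
      rw [Finset.mem_Icc] at hcI
      have := hP.2 c hcI.1 hcI.2
      rw [this]
      unfold rho
      rw [if_pos rfl]
    · rw [if_neg hP, if_neg hP, mul_zero]
  rw [Finset.sum_congr rfl hinner, Finset.sum_comm]
  refine Finset.sum_congr rfl fun c _ => ?_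
  by_cases hA : 1 ≤ lam (c+1)
  · have : ∀ β ∈ allSeqs n, (if 1 ≤ lam (c+1) ∧ Scond n (rho lam c) β then c * (lam c + 1) else 0)
        = (if Scond n (rho lam c) β then 1 else 0) * (c * (lam c + 1)) := by
      intro β _
      by_cases hB : Scond n (rho lam c) β
      · rw [if_pos ⟨hA, hB⟩, if_pos hB, one_mul]
      · rw [if_neg (fun hc => hB hc.2), if_neg hB, zero_mul]
    rw [Finset.sum_congr rfl this, ← Finset.sum_mul, ← Finset.card_filter]
    rw [if_pos hA]
    have : (allSeqs n).filter (Scond n (rho lam c)) = S n (rho lam c) := rfl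
    rw [this]
    ring
  · have : ∀ β ∈ allSeqs n, (if 1 ≤ lam (c+1) ∧ Scond n (rho lam c) β then c * (lam c + 1) else 0)
        = 0 := by
      intro β _
      rw [if_neg (fun hc => hA hc.1)]
    rw [Finset.sum_congr rfl this, Finset.sum_const_zero, if_neg hA, mul_zero]


lemma prod_fact_pos (t : Finset ℕ) (f : ℕ → ℕ) (ht : ∀ s ∈ t, 1 ≤ s) :
    0 < ∏ s ∈ t, ((s:ℚ)^(f s) * ((f s).factorial : ℚ)) := by
  refine Finset.prod_pos fun s hs => ?_
  have h1 : (0:ℚ) < (s:ℚ) := by exact_mod_cast ht s hs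
  exact mul_pos (pow_pos h1 _) (by exact_mod_cast (f s).factorial_pos)

lemma prod_top_split (lam : ℕ → ℕ) (n : ℕ) :
    ∏ s ∈ Finset.Icc 1 (n+1), ((s:ℚ)^(lam s) * ((lam s).factorial : ℚ))
      = ((n+1:ℕ):ℚ)^(lam (n+1)) * ((lam (n+1)).factorial : ℚ)
        * ∏ s ∈ Finset.Icc 1 n, ((s:ℚ)^(lam s) * ((lam s).factorial : ℚ)) := by
  rw [Icc_one_succ, Finset.prod_insert (by rw [Finset.mem_Icc]; omega)]

lemma prod_mu0 (hn : 1 ≤ n) (hl : 1 ≤ lam 1) :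
    (lam 1 : ℚ) * ∏ s ∈ Finset.Icc 1 n, ((s:ℚ)^(mu0 lam s) * ((mu0 lam s).factorial : ℚ))
      = ∏ s ∈ Finset.Icc 1 n, ((s:ℚ)^(lam s) * ((lam s).factorial : ℚ)) := by
  have hcm : (1:ℕ) ∈ Finset.Icc 1 n := by rw [Finset.mem_Icc]; omega
  rw [← Finset.mul_prod_erase _ (fun s : ℕ => (s:ℚ)^(mu0 lam s) * ((mu0 lam s).factorial : ℚ)) hcm,
    ← Finset.mul_prod_erase _ (fun s : ℕ => (s:ℚ)^(lam s) * ((lam s).factorial : ℚ)) hcm]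
  have hcongr : ∏ s ∈ (Finset.Icc 1 n).erase 1, ((s:ℚ)^(mu0 lam s) * ((mu0 lam s).factorial : ℚ))
      = ∏ s ∈ (Finset.Icc 1 n).erase 1, ((s:ℚ)^(lam s) * ((lam s).factorial : ℚ)) := by
    refine Finset.prod_congr rfl fun s hs => ?_
    rw [Finset.mem_erase] at hs
    unfold mu0
    rw [if_neg hs.1]
  rw [hcongr]
  have h1 : mu0 lam 1 = lam 1 - 1 := by unfold mu0; rw [if_pos rfl]
  rw [h1]
  obtain ⟨k, hk⟩ : ∃ k, lam 1 = k + 1 := ⟨lam 1 - 1, by omega⟩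
  rw [hk]
  simp only [Nat.add_sub_cancel, Nat.factorial_succ, Nat.cast_one, one_pow, Nat.cast_mul,
    Nat.cast_add]
  ring

lemma prod_rho_lt {c : ℕ} (hc1 : 1 ≤ c) (hcn : c + 1 ≤ n) (hl : 1 ≤ lam (c+1)) :
    ((c:ℚ)+1) * (lam (c+1) : ℚ) *
        ∏ s ∈ Finset.Icc 1 n, ((s:ℚ)^(rho lam c s) * ((rho lam c s).factorial : ℚ))
      = (c:ℚ) * ((lam c : ℚ)+1) *
          ∏ s ∈ Finset.Icc 1 n, ((s:ℚ)^(lam s) * ((lam s).factorial : ℚ)) := by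
  have hcm : c ∈ Finset.Icc 1 n := by rw [Finset.mem_Icc]; omega
  have hcm1 : c + 1 ∈ (Finset.Icc 1 n).erase c := by
    rw [Finset.mem_erase, Finset.mem_Icc]; omega
  have split : ∀ f : ℕ → ℕ, ∏ s ∈ Finset.Icc 1 n, ((s:ℚ)^(f s) * ((f s).factorial : ℚ))
      = ((c:ℚ)^(f c) * ((f c).factorial : ℚ)) * (((c+1:ℕ):ℚ)^(f (c+1)) * ((f (c+1)).factorial : ℚ)
          * ∏ s ∈ ((Finset.Icc 1 n).erase c).erase (c+1),
              ((s:ℚ)^(f s) * ((f s).factorial : ℚ))) := by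
    intro f
    rw [Finset.mul_prod_erase _ (fun s : ℕ => (s:ℚ)^(f s) * ((f s).factorial : ℚ)) hcm1,
      Finset.mul_prod_erase _ (fun s : ℕ => (s:ℚ)^(f s) * ((f s).factorial : ℚ)) hcm]
  rw [split (fun s => rho lam c s), split lam]
  have hcongr : ∏ s ∈ ((Finset.Icc 1 n).erase c).erase (c+1),
        ((s:ℚ)^(rho lam c s) * ((rho lam c s).factorial : ℚ))
      = ∏ s ∈ ((Finset.Icc 1 n).erase c).erase (c+1),
          ((s:ℚ)^(lam s) * ((lam s).factorial : ℚ)) := by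
    refine Finset.prod_congr rfl fun s hs => ?_
    rw [Finset.mem_erase, Finset.mem_erase] at hs
    unfold rho
    rw [if_neg hs.2.1, if_neg hs.1]
  rw [hcongr]
  have h1 : rho lam c c = lam c + 1 := by unfold rho; rw [if_pos rfl]
  have h2 : rho lam c (c+1) = lam (c+1) - 1 := by
    unfold rho; rw [if_neg (by omega), if_pos rfl]
  rw [h1, h2]
  obtain ⟨k, hk⟩ : ∃ k, lam (c+1) = k + 1 := ⟨lam (c+1) - 1, by omega⟩
  rw [hk]
  simp only [Nat.add_sub_cancel, Nat.factorial_succ, Nat.cast_mul, Nat.cast_add, Nat.cast_one,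
    pow_succ]
  ring

lemma prod_rho_top (hn : 1 ≤ n) (lam : ℕ → ℕ) :
    ∏ s ∈ Finset.Icc 1 n, ((s:ℚ)^(rho lam n s) * ((rho lam n s).factorial : ℚ))
      = (n:ℚ) * ((lam n : ℚ)+1) *
          ∏ s ∈ Finset.Icc 1 n, ((s:ℚ)^(lam s) * ((lam s).factorial : ℚ)) := by
  have hcm : n ∈ Finset.Icc 1 n := by rw [Finset.mem_Icc]; omega
  rw [← Finset.mul_prod_erase _ (fun s : ℕ => (s:ℚ)^(rho lam n s) * ((rho lam n s).factorial : ℚ)) hcm,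
    ← Finset.mul_prod_erase _ (fun s : ℕ => (s:ℚ)^(lam s) * ((lam s).factorial : ℚ)) hcm]
  have hcongr : ∏ s ∈ (Finset.Icc 1 n).erase n,
        ((s:ℚ)^(rho lam n s) * ((rho lam n s).factorial : ℚ))
      = ∏ s ∈ (Finset.Icc 1 n).erase n, ((s:ℚ)^(lam s) * ((lam s).factorial : ℚ)) := by
    refine Finset.prod_congr rfl fun s hs => ?_
    rw [Finset.mem_erase, Finset.mem_Icc] at hs
    unfold rho
    rw [if_neg hs.1, if_neg (by omega)]
  rw [hcongr]
  have h1 : rho lam n n = lam n + 1 := by unfold rho; rw [if_pos rfl]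
  rw [h1]
  simp only [Nat.factorial_succ, Nat.cast_mul, Nat.cast_add, Nat.cast_one, pow_succ]
  ring

lemma lam_top_zero (hsum : ∑ s ∈ Finset.Icc 1 (n+1), s * lam s = n + 1) (hn : 1 ≤ n)
    (hl : 1 ≤ lam 1) : lam (n+1) = 0 := by
  have hpb := pair_bound hsum (a := 1) (b := n+1) (by rw [Finset.mem_Icc]; omega)
    (by rw [Finset.mem_Icc]; omega) (by omega)
  rcases Nat.eq_zero_or_pos (lam (n+1)) with h0 | hpos
  · exact h0
  · exfalso
    have := Nat.le_mul_of_pos_right (n+1) hpos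
    omega


lemma claimA (hn : 1 ≤ n)
    (ih : ∀ lam : ℕ → ℕ, ((S n lam).card : ℚ) = if ∑ s ∈ Finset.Icc 1 n, s * lam s = n
      then (Nat.factorial n : ℚ) /
        ∏ s ∈ Finset.Icc 1 n, ((s:ℚ)^(lam s) * ((lam s).factorial : ℚ))
      else 0)
    (hsum : ∑ s ∈ Finset.Icc 1 (n+1), s * lam s = n + 1) :
    ((((S (n+1) lam).filter (fun α => α (n+1) = 0)).card : ℕ) : ℚ)
      = (lam 1 : ℚ) * (Nat.factorial n : ℚ)
        / ∏ s ∈ Finset.Icc 1 (n+1), ((s:ℚ)^(lam s) * ((lam s).factorial : ℚ)) := by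
  by_cases hl : 1 ≤ lam 1
  · have htop := lam_top_zero hsum hn hl
    have hP : ∏ s ∈ Finset.Icc 1 (n+1), ((s:ℚ)^(lam s) * ((lam s).factorial : ℚ))
        = ∏ s ∈ Finset.Icc 1 n, ((s:ℚ)^(lam s) * ((lam s).factorial : ℚ)) := by
      rw [prod_top_split, htop]
      norm_num
    have hcond : ∑ s ∈ Finset.Icc 1 n, s * mu0 lam s = n := by
      have h1 := sum_mu0 hn hl
      have h2 := sum_top_split lam n
      rw [htop] at h2
      omega
    rw [fiber0_eq hn hl hsum, ih (mu0 lam), if_pos hcond, hP]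
    have hDmu := prod_mu0 hn hl
    have hlne : (lam 1 : ℚ) ≠ 0 := by
      have : (0:ℚ) < lam 1 := by exact_mod_cast hl
      exact ne_of_gt this
    rw [← hDmu, mul_div_mul_left _ _ hlne]
  · have hl0 : lam 1 = 0 := by omega
    rw [fiber0_empty hn hl0, Finset.card_empty, hl0]
    norm_num

lemma claimB (hn : 1 ≤ n)
    (ih : ∀ lam : ℕ → ℕ, ((S n lam).card : ℚ) = if ∑ s ∈ Finset.Icc 1 n, s * lam s = n
      then (Nat.factorial n : ℚ) /
        ∏ s ∈ Finset.Icc 1 n, ((s:ℚ)^(lam s) * ((lam s).factorial : ℚ))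
      else 0)
    (hsum : ∑ s ∈ Finset.Icc 1 (n+1), s * lam s = n + 1) {c : ℕ}
    (hc : c ∈ Finset.Icc 1 n) :
    (((c * (lam c + 1)) * (if 1 ≤ lam (c+1) then (S n (rho lam c)).card else 0) : ℕ) : ℚ)
      = (((c+1) * lam (c+1) : ℕ) : ℚ) * (Nat.factorial n : ℚ)
        / ∏ s ∈ Finset.Icc 1 (n+1), ((s:ℚ)^(lam s) * ((lam s).factorial : ℚ)) := by
  rw [Finset.mem_Icc] at hc
  have hDpos : 0 < ∏ s ∈ Finset.Icc 1 n, ((s:ℚ)^(lam s) * ((lam s).factorial : ℚ)) :=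
    prod_fact_pos _ _ (fun s hs => (Finset.mem_Icc.1 hs).1)
  by_cases hl : 1 ≤ lam (c+1)
  · rw [if_pos hl, Nat.cast_mul]
    by_cases hcn : c = n
    · rw [hcn] at hl ⊢
      have hsb := single_bound hsum (a := n+1) (by rw [Finset.mem_Icc]; omega)
      have h1 : lam (n+1) = 1 := by
        rcases Nat.lt_or_ge (lam (n+1)) 2 with h | h
        · omega
        · exfalso
          have h2 : (n+1) * 2 ≤ (n+1) * lam (n+1) := Nat.mul_le_mul_left (n+1) h
          omega
      have hcond : ∑ s ∈ Finset.Icc 1 n, s * rho lam n s = n := by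
        have h2 := sum_top_split lam n
        have h3 := sum_rho_top hn lam
        rw [h1, Nat.mul_one] at h2
        omega
      rw [ih (rho lam n), if_pos hcond]
      have hD := prod_rho_top hn lam
      have hPs := prod_top_split lam n
      rw [h1] at hPs
      rw [hD, hPs, h1]
      have hn0 : (n:ℚ) ≠ 0 := by
        have : (0:ℚ) < n := by exact_mod_cast hn
        exact ne_of_gt this
      have hlamn : ((lam n : ℚ) + 1) ≠ 0 := by positivity
      have hDne := ne_of_gt hDpos
      have hn1 : ((n+1:ℕ):ℚ) ≠ 0 := by
        have : (0:ℚ) < ((n+1:ℕ):ℚ) := by exact_mod_cast Nat.succ_pos n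
        exact ne_of_gt this
      field_simp
      push_cast
      ring
    · have hlt : c + 1 ≤ n := by omega
      have htop : lam (n+1) = 0 := by
        by_contra h0
        have hpos : 1 ≤ lam (n+1) := by omega
        have hpb := pair_bound hsum (a := c+1) (b := n+1) (by rw [Finset.mem_Icc]; omega)
          (by rw [Finset.mem_Icc]; omega) (by omega)
        have h1 : c+1 ≤ (c+1) * lam (c+1) := Nat.le_mul_of_pos_right _ hl
        have h2 : n+1 ≤ (n+1) * lam (n+1) := Nat.le_mul_of_pos_right _ hpos
        omega
      have hcond : ∑ s ∈ Finset.Icc 1 n, s * rho lam c s = n := by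
        have h2 := sum_top_split lam n
        have h3 := sum_rho_lt (n := n) (by omega) hlt hl
        rw [htop] at h2
        omega
      rw [ih (rho lam c), if_pos hcond]
      have hD := prod_rho_lt (n := n) (by omega) hlt hl
      have hPs := prod_top_split lam n
      rw [htop] at hPs
      norm_num at hPs
      rw [hPs]
      have hRpos : 0 < ∏ s ∈ Finset.Icc 1 n,
          ((s:ℚ)^(rho lam c s) * ((rho lam c s).factorial : ℚ)) :=
        prod_fact_pos _ _ (fun s hs => (Finset.mem_Icc.1 hs).1)
      have hRne := ne_of_gt hRpos
      have hDne := ne_of_gt hDpos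
      field_simp
      push_cast
      push_cast at hD
      linear_combination (-1 : ℚ) * hD
  · have hl0 : lam (c+1) = 0 := by omega
    rw [if_neg hl, hl0]
    norm_num

end Step

lemma main_claim : ∀ m, 1 ≤ m → ∀ lam : ℕ → ℕ,
    ((S m lam).card : ℚ) = if ∑ s ∈ Finset.Icc 1 m, s * lam s = m
      then (Nat.factorial m : ℚ) /
        ∏ s ∈ Finset.Icc 1 m, ((s:ℚ)^(lam s) * ((lam s).factorial : ℚ))
      else 0 := by
  intro m hm
  induction m, hm using Nat.le_induction with
  | base =>
      intro lam
      have h11 : Finset.Icc 1 1 = {1} := Finset.Icc_self 1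
      by_cases hl : lam 1 = 1
      · have hS : S 1 lam = {fun _ => 0} := by
          ext α
          rw [Finset.mem_singleton]
          constructor
          · intro hmem
            have h1 := (mem_S.1 hmem).1
            have h2 : α ∈ allSeqs 1 := mem_allSeqs.2 h1
            rwa [allSeqs_one, Finset.mem_singleton] at h2
          · rintro rfl
            refine mem_S.2 ⟨⟨fun j hj1 hj2 => hj1, fun j hj => rfl⟩, fun s hs1 hs2 => ?_⟩
            have hs : s = 1 := by omega
            rw [hs, cnt_one, hl]
        rw [hS, Finset.card_singleton, if_pos (by rw [h11, Finset.sum_singleton]; omega)]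
        rw [h11, Finset.prod_singleton, hl]
        norm_num
      · have hS : S 1 lam = ∅ := by
          rw [Finset.eq_empty_iff_forall_notMem]
          intro α hα
          obtain ⟨h1, h2⟩ := mem_S.1 hα
          have hz : α = fun _ => 0 := by
            have h3 : α ∈ allSeqs 1 := mem_allSeqs.2 h1
            rwa [allSeqs_one, Finset.mem_singleton] at h3
          have := h2 1 (le_refl _) (le_refl _)
          rw [hz, cnt_one] at this
          omega
        rw [hS, Finset.card_empty, if_neg (by rw [h11, Finset.sum_singleton]; omega)]
        norm_num
  | succ n hn ih =>
      intro lam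
      by_cases hsum : ∑ s ∈ Finset.Icc 1 (n+1), s * lam s = n + 1
      · rw [if_pos hsum]
        have hK : lam 1 + ∑ c ∈ Finset.Icc 1 n, (c+1) * lam (c+1) = n + 1 := by
          have hmap : ∑ s ∈ Finset.Icc 2 (n+1), s * lam s
              = ∑ c ∈ Finset.Icc 1 n, (c+1) * lam (c+1) := by
            rw [← Finset.map_add_right_Icc 1 n 1, Finset.sum_map]
            rfl
          have hsplit : ∑ s ∈ Finset.Icc 1 (n+1), s * lam s
              = 1 * lam 1 + ∑ s ∈ Finset.Icc 2 (n+1), s * lam s := by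
            rw [show Finset.Icc 1 (n+1) = insert 1 (Finset.Icc 2 (n+1)) from by
                ext x
                simp only [Finset.mem_insert, Finset.mem_Icc]
                omega,
              Finset.sum_insert (by simp)]
          omega
        have hfv : ∀ v ∈ Finset.Icc 1 n, ((S (n+1) lam).filter (fun α => α (n+1) = v)).card
            = ((allSeqs n).filter
                (fun β => Scond (n+1) lam (Function.update β (n+1) v))).card := by
          intro v hv
          rw [Finset.mem_Icc] at hv
          exact fiberv_card hn hv.1 hv.2
        have hstep : (S (n+1) lam).card
            = ((S (n+1) lam).filter (fun α => α (n+1) = 0)).card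
              + ∑ c ∈ Finset.Icc 1 n, (c * (lam c + 1)) *
                  (if 1 ≤ lam (c+1) then (S n (rho lam c)).card else 0) := by
          rw [step_decomp lam n, Finset.sum_congr rfl hfv, sum_v hn hsum]
        rw [hstep, Nat.cast_add, Nat.cast_sum]
        rw [claimA hn ih hsum, Finset.sum_congr rfl (fun c hc => claimB hn ih hsum hc)]
        rw [← Finset.sum_div, ← add_div, ← Finset.sum_mul, ← add_mul]
        congr 1
        have hcast : ((lam 1:ℚ) + ∑ c ∈ Finset.Icc 1 n, (((c+1) * lam (c+1) : ℕ) : ℚ))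
            = ((n+1 : ℕ):ℚ) := by
          rw [← Nat.cast_sum, ← Nat.cast_add, hK]
        rw [hcast, Nat.factorial_succ]
        push_cast
        ring
      · rw [if_neg hsum, S_empty (by omega) hsum]
        norm_num

end IdxSeqAux

open scoped Classical

theorem card_index_sequences_with_component_type (m : ℕ) (hm : 1 ≤ m)
    (lam : ℕ → ℕ) (hlam : ∑ s ∈ Finset.Icc 1 m, s * lam s = m) :
    (Nat.card {α : ℕ → ℕ //
        (∀ j, 1 ≤ j → j ≤ m → α j < j) ∧
        (∀ j, ¬(1 ≤ j ∧ j ≤ m) → α j = 0) ∧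
        ∀ s ∈ Finset.Icc 1 m,
          ((Finset.Icc 1 m).filter fun h => α h = 0 ∧
            ((Finset.Icc 1 m).filter fun j => ∃ k : ℕ, α^[k] j = h).card = s).card
            = lam s} : ℚ) =
      (Nat.factorial m : ℚ) /
        ∏ s ∈ Finset.Icc 1 m, ((s : ℚ) ^ lam s * (Nat.factorial (lam s) : ℚ)) := by
  have hbridge : Nat.card {α : ℕ → ℕ //
      (∀ j, 1 ≤ j → j ≤ m → α j < j) ∧
      (∀ j, ¬(1 ≤ j ∧ j ≤ m) → α j = 0) ∧
      ∀ s ∈ Finset.Icc 1 m,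
        ((Finset.Icc 1 m).filter fun h => α h = 0 ∧
          ((Finset.Icc 1 m).filter fun j => ∃ k : ℕ, α^[k] j = h).card = s).card
          = lam s} = (IdxSeqAux.S m lam).card := by
    rw [← Nat.card_eq_finsetCard]
    refine Nat.card_congr (Equiv.subtypeEquivRight fun α => ?_)
    rw [IdxSeqAux.mem_S]
    constructor
    · rintro ⟨h1, h2, h3⟩
      exact ⟨⟨h1, h2⟩, fun s hs1 hs2 => h3 s (Finset.mem_Icc.2 ⟨hs1, hs2⟩)⟩
    · rintro ⟨⟨h1, h2⟩, h3⟩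
      exact ⟨h1, h2, fun s hs => h3 s (Finset.mem_Icc.1 hs).1 (Finset.mem_Icc.1 hs).2⟩
  rw [hbridge, IdxSeqAux.main_claim m hm lam, if_pos hlam]
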